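/- arXiv:1002.0549 — 2 statements merged into one kernel-verified Lean document; each statement's English description precedes it below -/
import Mathlib

section
/- Let f : X → X and g : Y → Y be continuous maps on compact metric spaces conjugated by a bi-Lipschitz homeomorphism H : X → Y (H ∘ f = g ∘ H, with H and H^{-1} Lipschitz). Then h_L^+(f) = h_L^+(g) and h_L^-(f) = h_L^-(g). -/
open Set Filter Topology Metric
open scoped ENNReal NNReal

/-- `U` is an open cover of `X`: a family of open sets whose union is `X`. -/
def IsOpenCover {X : Type*} [MetricSpace X] (U : Set (Set X)) : Prop :=
  (∀ A ∈ U, IsOpen A) ∧ ⋃₀ U = Set.univ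

/-- The Lebesgue number of a cover `U`: the largest `δ` such that every open
ball of radius `δ` is contained in some element of `U`. -/
noncomputable def leb {X : Type*} [MetricSpace X] (U : Set (Set X)) : ℝ≥0∞ :=
  sSup {δ : ℝ≥0∞ | ∀ x : X, ∃ A ∈ U, EMetric.ball x δ ⊆ A}

/-- The cover `{g⁻¹(A) : A ∈ U}`. -/
def preCov {X : Type*} (g : X → X) (U : Set (Set X)) : Set (Set X) :=
  (fun A => g ⁻¹' A) '' U

/-- The join `U ∨ V = {A ∩ B : A ∈ U, B ∈ V}` of two covers. -/
def covJoin {X : Type*} (U V : Set (Set X)) : Set (Set X) :=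
  {S | ∃ A ∈ U, ∃ B ∈ V, S = A ∩ B}

/-- The cover `U_f^n = ⋁_{k=0}^{n-1} f^{-k}(U)`. -/
def covSeq {X : Type*} (f : X → X) (U : Set (Set X)) (n : ℕ) : Set (Set X) :=
  {S | ∃ g : Fin n → Set X, (∀ k, g k ∈ U) ∧ S = ⋂ k : Fin n, (f^[(k : ℕ)]) ⁻¹' g k}

/-- `δ_n(f,U)`, the Lebesgue number of `U_f^n`. -/
noncomputable def lebN {X : Type*} [MetricSpace X] (f : X → X) (U : Set (Set X)) (n : ℕ) : ℝ≥0∞ :=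
  leb (covSeq f U n)

/-- `h_L^+(f,U) = limsup_n -(1/n) log δ_n(f,U)`. -/
noncomputable def hLplus {X : Type*} [MetricSpace X] (f : X → X) (U : Set (Set X)) : EReal :=
  Filter.limsup (fun n : ℕ => ((-Real.log ((lebN f U n).toReal) / n : ℝ) : EReal)) atTop

/-- `h_L^-(f,U) = liminf_n -(1/n) log δ_n(f,U)`. -/
noncomputable def hLminus {X : Type*} [MetricSpace X] (f : X → X) (U : Set (Set X)) : EReal :=
  Filter.liminf (fun n : ℕ => ((-Real.log ((lebN f U n).toReal) / n : ℝ) : EReal)) atTop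

/-- `h_L^+(f)`: supremum over finite open covers. -/
noncomputable def hLplusSup {X : Type*} [MetricSpace X] (f : X → X) : EReal :=
  ⨆ (U : Set (Set X)) (_ : IsOpenCover U ∧ U.Finite), hLplus f U

/-- `h_L^-(f)`: supremum over finite open covers. -/
noncomputable def hLminusSup {X : Type*} [MetricSpace X] (f : X → X) : EReal :=
  ⨆ (U : Set (Set X)) (_ : IsOpenCover U ∧ U.Finite), hLminus f U

/-- The diameter of a cover: supremum of diameters of its elements. -/
noncomputable def covDiam {X : Type*} [MetricSpace X] (U : Set (Set X)) : ℝ≥0∞ :=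
  ⨆ A ∈ U, EMetric.diam A

/-- `U` refines `V`: every element of `U` is contained in some element of `V`. -/
def Refines {X : Type*} (U V : Set (Set X)) : Prop :=
  ∀ A ∈ U, ∃ B ∈ V, A ⊆ B

/-- `N(γ)`: the minimal number of open `γ`-balls needed to cover `X`. -/
noncomputable def covN (X : Type*) [MetricSpace X] (γ : ℝ≥0∞) : ℕ :=
  sInf {n : ℕ | ∃ s : Finset X, s.card = n ∧ ⋃ x ∈ s, EMetric.ball x γ = Set.univ}

/-- `S(U)`: the smallest cardinality of a subcover of `U`. -/
noncomputable def covS {X : Type*} [MetricSpace X] (U : Set (Set X)) : ℕ :=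
  sInf {m : ℕ | ∃ W ⊆ U, ⋃₀ W = Set.univ ∧ W.ncard = m}

/-- `s_n(f,ε)`: maximal cardinality of an `(n,ε)`-separated set. -/
noncomputable def sep {X : Type*} [MetricSpace X] (f : X → X) (n : ℕ) (ε : ℝ) : ℕ :=
  sSup {m : ℕ | ∃ E : Finset X, E.card = m ∧
    ∀ x ∈ E, ∀ y ∈ E, x ≠ y → ∃ k < n, ε < dist (f^[k] x) (f^[k] y)}

/-- Topological entropy via `(n,ε)`-separated sets. -/
noncomputable def topEnt {X : Type*} [MetricSpace X] (f : X → X) : EReal :=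
  ⨆ (ε : ℝ) (_ : 0 < ε),
    Filter.limsup (fun n : ℕ => ((Real.log (sep f n ε) / n : ℝ) : EReal)) atTop

/-- Upper box dimension of `X`. -/
noncomputable def dimB (X : Type*) [MetricSpace X] : EReal :=
  Filter.limsup
    (fun γ : ℝ => ((Real.log (covN X (ENNReal.ofReal γ)) / -Real.log γ : ℝ) : EReal))
    (nhdsWithin (0:ℝ) (Set.Ioi 0))
section BiLipAux

variable {X Y : Type*}

/-- Adding a real constant is an order isomorphism of `EReal`. -/
noncomputable def erealAddIso (c : ℝ) : EReal ≃o EReal where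
  toFun x := x + (c : EReal)
  invFun x := x - (c : EReal)
  left_inv _ := EReal.add_sub_cancel_right
  right_inv _ := EReal.sub_add_cancel
  map_rel_iff' := (EReal.addLECancellable_coe c).add_le_add_iff_right

lemma ereal_limsup_add_const (u : ℕ → EReal) (c : ℝ) :
    Filter.limsup (fun n => u n + (c : EReal)) atTop = Filter.limsup u atTop + c :=
  ((erealAddIso c).limsup_apply (u := u) (f := atTop)).symm

lemma ereal_liminf_add_const (u : ℕ → EReal) (c : ℝ) :
    Filter.liminf (fun n => u n + (c : EReal)) atTop = Filter.liminf u atTop + c :=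
  ((erealAddIso c).liminf_apply (u := u) (f := atTop)).symm

lemma ereal_le_of_forall_add (x y : EReal) (h : ∀ ε : ℝ, 0 < ε → x ≤ y + (ε : EReal)) :
    x ≤ y := by
  induction y with
  | bot => simpa using h 1 one_pos
  | coe t =>
    induction x with
    | bot => exact bot_le
    | coe s =>
      refine EReal.coe_le_coe_iff.mpr (le_of_forall_pos_le_add fun ε hε => ?_)
      have := h ε hε
      rw [← EReal.coe_add] at this
      exact EReal.coe_le_coe_iff.mp this
    | top =>
      exfalso
      have := h 1 one_pos
      rw [← EReal.coe_add, top_le_iff] at this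
      exact EReal.coe_ne_top _ this
  | top => exact le_top

lemma ereal_ev_le (u v : ℕ → ℝ) (c : ℝ) (h : ∀ n : ℕ, u n ≤ v n + c / n)
    (ε : ℝ) (hε : 0 < ε) :
    ∀ᶠ n in atTop, ((u n : ℝ) : EReal) ≤ ((v n : ℝ) : EReal) + (ε : EReal) := by
  have hev : ∀ᶠ n : ℕ in atTop, c / n < ε :=
    (tendsto_const_div_atTop_nhds_zero_nat c).eventually_lt_const hε
  filter_upwards [hev] with n hn
  have h2 : u n ≤ v n + ε := (h n).trans (by linarith)
  rw [← EReal.coe_add]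
  exact_mod_cast h2

lemma ereal_limsup_le_limsup' (u v : ℕ → ℝ) (c : ℝ) (h : ∀ n : ℕ, u n ≤ v n + c / n) :
    Filter.limsup (fun n => ((u n : ℝ) : EReal)) atTop ≤
      Filter.limsup (fun n => ((v n : ℝ) : EReal)) atTop := by
  refine ereal_le_of_forall_add _ _ fun ε hε => ?_
  calc Filter.limsup (fun n => ((u n : ℝ) : EReal)) atTop
      ≤ Filter.limsup (fun n => ((v n : ℝ) : EReal) + (ε : EReal)) atTop :=
        Filter.limsup_le_limsup (ereal_ev_le u v c h ε hε)
    _ = Filter.limsup (fun n => ((v n : ℝ) : EReal)) atTop + (ε : EReal) :=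
        ereal_limsup_add_const _ ε

lemma ereal_liminf_le_liminf' (u v : ℕ → ℝ) (c : ℝ) (h : ∀ n : ℕ, u n ≤ v n + c / n) :
    Filter.liminf (fun n => ((u n : ℝ) : EReal)) atTop ≤
      Filter.liminf (fun n => ((v n : ℝ) : EReal)) atTop := by
  refine ereal_le_of_forall_add _ _ fun ε hε => ?_
  calc Filter.liminf (fun n => ((u n : ℝ) : EReal)) atTop
      ≤ Filter.liminf (fun n => ((v n : ℝ) : EReal) + (ε : EReal)) atTop :=
        Filter.liminf_le_liminf (ereal_ev_le u v c h ε hε)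
    _ = Filter.liminf (fun n => ((v n : ℝ) : EReal)) atTop + (ε : EReal) :=
        ereal_liminf_add_const _ ε

lemma leb_le_mul [MetricSpace X] [MetricSpace Y] (G : Y → X) (K : ℝ≥0)
    (hK0 : K ≠ 0) (hG : LipschitzWith K G) (W : Set (Set X)) :
    leb W ≤ (K : ℝ≥0∞) * leb ((fun A => G ⁻¹' A) '' W) := by
  apply sSup_le
  intro δ hδ
  have hmem : δ / K ∈ {δ' : ℝ≥0∞ | ∀ y : Y, ∃ A ∈ (fun A => G ⁻¹' A) '' W,
      EMetric.ball y δ' ⊆ A} := by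
    intro y
    obtain ⟨A, hA, hball⟩ := hδ (G y)
    refine ⟨G ⁻¹' A, mem_image_of_mem _ hA, fun z hz => ?_⟩
    have h1 : edist (G z) (G y) < δ := by
      calc edist (G z) (G y) ≤ (K : ℝ≥0∞) * edist z y := hG.edist_le_mul z y
        _ < (K : ℝ≥0∞) * (δ / K) :=
            (ENNReal.mul_lt_mul_iff_right (by exact_mod_cast hK0) ENNReal.coe_ne_top).mpr hz
        _ ≤ δ := ENNReal.mul_div_le
    exact hball h1
  calc δ = (K : ℝ≥0∞) * (δ / K) :=
        (ENNReal.mul_div_cancel (by exact_mod_cast hK0) ENNReal.coe_ne_top).symm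
    _ ≤ (K : ℝ≥0∞) * leb ((fun A => G ⁻¹' A) '' W) := mul_le_mul_right (le_sSup hmem) _

lemma covSeq_image (f : X → X) (g : Y → Y) (G : Y → X)
    (hc : ∀ y, G (g y) = f (G y)) (U : Set (Set X)) (n : ℕ) :
    covSeq g ((fun A => G ⁻¹' A) '' U) n = (fun S => G ⁻¹' S) '' covSeq f U n := by
  have hsc : Function.Semiconj G g f := hc
  have hiter : ∀ (k : ℕ) (y : Y), G (g^[k] y) = f^[k] (G y) := fun k => hsc.iterate_right k
  have hkey : ∀ (k : ℕ) (A : Set X), (g^[k]) ⁻¹' (G ⁻¹' A) = G ⁻¹' ((f^[k]) ⁻¹' A) := by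
    intro k A
    ext y
    simp only [mem_preimage, hiter k y]
  ext S
  constructor
  · rintro ⟨h', hmem, rfl⟩
    choose a ha hEq using hmem
    refine ⟨⋂ k : Fin n, (f^[(k : ℕ)]) ⁻¹' a k, ⟨a, ha, rfl⟩, ?_⟩
    simp only [preimage_iInter]
    exact iInter_congr fun k => by rw [← hkey]; exact congrArg _ (hEq k)
  · rintro ⟨T, ⟨a, ha, rfl⟩, rfl⟩
    refine ⟨fun k => G ⁻¹' (a k), fun k => mem_image_of_mem _ (ha k), ?_⟩
    simp only [preimage_iInter]
    exact iInter_congr fun k => (hkey _ _).symm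

lemma term_le_aux (a b : ℝ≥0∞) (Ka Kb : ℝ≥0) (hKa : 1 ≤ Ka)
    (hba : b ≤ (Ka : ℝ≥0∞) * a) (hab : a ≤ (Kb : ℝ≥0∞) * b) (n : ℕ) :
    -Real.log a.toReal / n ≤ -Real.log b.toReal / n + Real.log Ka / n := by
  have hKa0 : (0 : ℝ) < (Ka : ℝ) := lt_of_lt_of_le one_pos (by exact_mod_cast hKa)
  have hlogKa : 0 ≤ Real.log Ka := Real.log_nonneg (by exact_mod_cast hKa)
  rcases Nat.eq_zero_or_pos n with hn | hn
  · simp [hn]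
  have hnR : (0 : ℝ) < (n : ℝ) := by exact_mod_cast hn
  have key : -Real.log a.toReal ≤ -Real.log b.toReal + Real.log Ka := by
    by_cases ha : a = ∞
    · have hb : b = ∞ := by
        by_contra hb
        exact ENNReal.mul_ne_top ENNReal.coe_ne_top hb (top_le_iff.mp (ha ▸ hab))
      simp [ha, hb, hlogKa]
    · have hb : b ≠ ∞ := by
        intro hb
        rw [hb, top_le_iff] at hba
        exact ha (by
          rcases ENNReal.mul_eq_top.mp hba with ⟨_, h⟩ | ⟨h, _⟩
          · exact h
          · exact absurd h ENNReal.coe_ne_top)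
      by_cases ha0 : a = 0
      · have hb0 : b = 0 := le_antisymm (by simpa [ha0] using hba) zero_le
        simp [ha0, hb0, hlogKa]
      · have hb0 : b ≠ 0 := by
          intro hb0
          exact ha0 (le_antisymm (by simpa [hb0] using hab) zero_le)
        have hA : 0 < a.toReal := ENNReal.toReal_pos ha0 ha
        have hB : 0 < b.toReal := ENNReal.toReal_pos hb0 hb
        have hbaR : b.toReal ≤ (Ka : ℝ) * a.toReal := by
          have h := ENNReal.toReal_mono (ENNReal.mul_ne_top ENNReal.coe_ne_top ha) hba
          rwa [ENNReal.toReal_mul, ENNReal.coe_toReal] at h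
        have hlog : Real.log b.toReal ≤ Real.log ((Ka : ℝ) * a.toReal) :=
          Real.log_le_log hB hbaR
        rw [Real.log_mul (ne_of_gt hKa0) (ne_of_gt hA)] at hlog
        linarith
  rw [← add_div]
  exact div_le_div_of_nonneg_right key hnR.le

lemma hL_cover_le [MetricSpace X] [MetricSpace Y]
    (f : X → X) (g : Y → Y) (H : X ≃ Y) (K K' : ℝ≥0) (hK : 1 ≤ K) (hK' : 1 ≤ K')
    (hH : LipschitzWith K ⇑H) (hH' : LipschitzWith K' ⇑H.symm)
    (hconj : ∀ x : X, H (f x) = g (H x)) (U : Set (Set X)) :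
    hLplus f U ≤ hLplus g ((fun A => H.symm ⁻¹' A) '' U) ∧
      hLminus f U ≤ hLminus g ((fun A => H.symm ⁻¹' A) '' U) := by
  set V : Set (Set Y) := (fun A => H.symm ⁻¹' A) '' U with hV
  have hK0 : K ≠ 0 := (zero_lt_one.trans_le hK).ne'
  have hK'0 : K' ≠ 0 := (zero_lt_one.trans_le hK').ne'
  have hconj' : ∀ y, H.symm (g y) = f (H.symm y) := fun y =>
    H.injective (by rw [Equiv.apply_symm_apply, hconj, Equiv.apply_symm_apply])
  have hVU : (fun A => ⇑H ⁻¹' A) '' V = U := by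
    rw [hV, Set.image_image]
    have hid : ∀ A : Set X, ⇑H ⁻¹' (⇑H.symm ⁻¹' A) = A := fun A => by ext x; simp
    simp only [hid, Set.image_id']
  have h1 : ∀ n, lebN f U n ≤ (K' : ℝ≥0∞) * lebN g V n := fun n => by
    calc lebN f U n = leb (covSeq f U n) := rfl
      _ ≤ (K' : ℝ≥0∞) * leb ((fun S => ⇑H.symm ⁻¹' S) '' covSeq f U n) :=
          leb_le_mul ⇑H.symm K' hK'0 hH' _
      _ = (K' : ℝ≥0∞) * lebN g V n := by
          rw [← covSeq_image f g ⇑H.symm hconj' U n]; rfl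
  have h2 : ∀ n, lebN g V n ≤ (K : ℝ≥0∞) * lebN f U n := fun n => by
    calc lebN g V n = leb (covSeq g V n) := rfl
      _ ≤ (K : ℝ≥0∞) * leb ((fun S => ⇑H ⁻¹' S) '' covSeq g V n) :=
          leb_le_mul ⇑H K hK0 hH _
      _ = (K : ℝ≥0∞) * lebN f U n := by
          rw [← covSeq_image g f ⇑H hconj V n, hVU]; rfl
  have hterm : ∀ n : ℕ, -Real.log ((lebN f U n).toReal) / n ≤
      -Real.log ((lebN g V n).toReal) / n + Real.log K / n :=
    fun n => term_le_aux (lebN f U n) (lebN g V n) K K' hK (h2 n) (h1 n) n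
  exact ⟨ereal_limsup_le_limsup' _ _ _ hterm, ereal_liminf_le_liminf' _ _ _ hterm⟩

lemma hLsup_le_aux [MetricSpace X] [MetricSpace Y]
    (f : X → X) (g : Y → Y) (H : X ≃ Y) (K K' : ℝ≥0)
    (hH : LipschitzWith K ⇑H) (hH' : LipschitzWith K' ⇑H.symm)
    (hconj : ∀ x : X, H (f x) = g (H x)) :
    hLplusSup f ≤ hLplusSup g ∧ hLminusSup f ≤ hLminusSup g := by
  have hH1 : LipschitzWith (max K 1) ⇑H := hH.weaken (le_max_left _ _)
  have hH'1 : LipschitzWith (max K' 1) ⇑H.symm := hH'.weaken (le_max_left _ _)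
  have cover : ∀ U : Set (Set X), (IsOpenCover U ∧ U.Finite) →
      IsOpenCover ((fun A => H.symm ⁻¹' A) '' U) ∧
        ((fun A => H.symm ⁻¹' A) '' U).Finite := by
    rintro U ⟨⟨hop, hun⟩, hfin⟩
    refine ⟨⟨?_, ?_⟩, hfin.image _⟩
    · rintro B ⟨A, hA, rfl⟩
      exact (hop A hA).preimage hH'.continuous
    · rw [Set.sUnion_image, ← Set.preimage_sUnion, hun, Set.preimage_univ]
  have main := hL_cover_le f g H (max K 1) (max K' 1) (le_max_right _ _)
    (le_max_right _ _) hH1 hH'1 hconj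
  constructor
  · refine iSup_le fun U => iSup_le fun hU => ?_
    exact le_trans (main U).1
      (le_iSup₂ (f := fun V (_ : IsOpenCover V ∧ V.Finite) => hLplus g V) _ (cover U hU))
  · refine iSup_le fun U => iSup_le fun hU => ?_
    exact le_trans (main U).2
      (le_iSup₂ (f := fun V (_ : IsOpenCover V ∧ V.Finite) => hLminus g V) _ (cover U hU))

end BiLipAux

/-- `h_L^±` is invariant under bi-Lipschitz conjugacy. -/
theorem hL_biLipschitz_conj_invariant {X Y : Type*} [MetricSpace X] [CompactSpace X]
    [MetricSpace Y] [CompactSpace Y]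
    (f : X → X) (g : Y → Y) (hf : Continuous f) (hg : Continuous g)
    (H : X ≃ Y) (K K' : ℝ≥0)
    (hH : LipschitzWith K H) (hH' : LipschitzWith K' H.symm)
    (hconj : ∀ x : X, H (f x) = g (H x)) :
    hLplusSup f = hLplusSup g ∧ hLminusSup f = hLminusSup g := by
  have hconj' : ∀ y, H.symm (g y) = f (H.symm y) := fun y =>
    H.injective (by rw [Equiv.apply_symm_apply, hconj, Equiv.apply_symm_apply])
  have hHs : LipschitzWith K ⇑H.symm.symm := by simpa using hH
  have A := hLsup_le_aux f g H K K' hH hH' hconj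
  have B := hLsup_le_aux g f H.symm K' K hH' hHs hconj'
  exact ⟨le_antisymm A.1 B.1, le_antisymm A.2 B.2⟩
end

section
/- Let f : [0,1] → [0,1] be defined by f(x) = √x. Then h_L^+(f) = h_L^-(f) = ∞; specifically, for every finite open cover U of [0,1] of diameter less than 1/10, δ_n(f,U) ≤ 2^{-2^{n-1}} for all n ≥ 1. -/
open Set Filter Topology Metric
open scoped ENNReal

section
variable (f : Set.Icc (0:ℝ) 1 → Set.Icc (0:ℝ) 1)

lemma sqrt_mem (x : Set.Icc (0:ℝ) 1) : Real.sqrt x ∈ Set.Icc (0:ℝ) 1 :=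
  ⟨Real.sqrt_nonneg _, by
    calc Real.sqrt x ≤ Real.sqrt 1 := Real.sqrt_le_sqrt x.2.2
    _ = 1 := Real.sqrt_one⟩

lemma cont_f (hf : ∀ x : Set.Icc (0:ℝ) 1, (f x : ℝ) = Real.sqrt x) : Continuous f := by
  have : f = fun x => ⟨Real.sqrt x, sqrt_mem x⟩ := funext fun x => Subtype.ext (hf x)
  rw [this]
  exact Continuous.subtype_mk (Real.continuous_sqrt.comp continuous_subtype_val) _

lemma iter_zero (hf : ∀ x : Set.Icc (0:ℝ) 1, (f x : ℝ) = Real.sqrt x) :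
    ∀ (m : ℕ) (x : Set.Icc (0:ℝ) 1), (x:ℝ) = 0 → (f^[m] x : ℝ) = 0 := by
  intro m
  induction m with
  | zero => intro x hx; simpa using hx
  | succ m ih =>
    intro x hx
    rw [Function.iterate_succ_apply]
    exact ih _ (by rw [hf, hx, Real.sqrt_zero])

lemma iter_pt (hf : ∀ x : Set.Icc (0:ℝ) 1, (f x : ℝ) = Real.sqrt x) :
    ∀ (m : ℕ) (x : Set.Icc (0:ℝ) 1), (x:ℝ) = (((2:ℝ) ^ (2 ^ m : ℕ))⁻¹) →
      (f^[m] x : ℝ) = 2⁻¹ := by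
  intro m
  induction m with
  | zero => intro x hx; simpa using hx
  | succ m ih =>
    intro x hx
    rw [Function.iterate_succ_apply]
    apply ih
    rw [hf, hx]
    have h2 : ((2:ℝ) ^ (2 ^ (m+1) : ℕ)) = ((2:ℝ) ^ (2 ^ m : ℕ)) ^ 2 := by
      rw [← pow_mul, pow_succ]
    rw [h2, ← inv_pow, Real.sqrt_sq (by positivity)]
end
-- DEFS
-- AUX
section
variable (f : Set.Icc (0:ℝ) 1 → Set.Icc (0:ℝ) 1)

lemma lebN_bound (hf : ∀ x : Set.Icc (0:ℝ) 1, (f x : ℝ) = Real.sqrt x)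
    (U : Set (Set (Set.Icc (0:ℝ) 1))) (hU : IsOpenCover U)
    (hd : covDiam U < ENNReal.ofReal (1/10)) (n : ℕ) (hn : 1 ≤ n) :
    lebN f U n ≤ ENNReal.ofReal (((2:ℝ) ^ (2 ^ (n - 1) : ℕ))⁻¹) := by
  set m := n - 1 with hm
  set t : ℝ := ((2:ℝ) ^ (2 ^ m : ℕ))⁻¹ with ht
  have ht0 : 0 < t := by positivity
  have ht1 : t ≤ 1 := by
    rw [ht]
    apply inv_le_one_of_one_le₀
    exact one_le_pow₀ (by norm_num)
  apply sSup_le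
  intro δ hδ
  by_contra hlt
  push_neg at hlt
  have hδ0 : 0 < δ := lt_trans (by simp [ENNReal.ofReal_pos, ht0]) hlt
  obtain ⟨A, hA, hball⟩ := hδ ⟨0, by norm_num⟩
  obtain ⟨g, hg, rfl⟩ := hA
  have hk : m < n := by omega
  -- the two points
  have hp : (⟨t, ⟨le_of_lt ht0, ht1⟩⟩ : Set.Icc (0:ℝ) 1) ∈
      EMetric.ball (⟨0, by norm_num⟩ : Set.Icc (0:ℝ) 1) δ := by
    rw [EMetric.ball, EMetric.mem_ball, edist_dist, Subtype.dist_eq]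
    calc ENNReal.ofReal (dist t (0:ℝ)) = ENNReal.ofReal t := by
          rw [Real.dist_eq, sub_zero, abs_of_pos ht0]
      _ < δ := hlt
  have h0 : (⟨0, by norm_num⟩ : Set.Icc (0:ℝ) 1) ∈
      EMetric.ball (⟨0, by norm_num⟩ : Set.Icc (0:ℝ) 1) δ := EMetric.mem_ball_self hδ0
  have h1 := hball hp
  have h2 := hball h0
  rw [Set.mem_iInter] at h1 h2
  have h1' := h1 ⟨m, hk⟩
  have h2' := h2 ⟨m, hk⟩
  rw [Set.mem_preimage] at h1' h2'
  have hdiam : EMetric.diam (g ⟨m, hk⟩) < ENNReal.ofReal (1/10) :=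
    lt_of_le_of_lt (le_iSup₂ (f := fun A (_ : A ∈ U) => EMetric.diam A) _ (hg ⟨m, hk⟩)) hd
  have hedist := EMetric.edist_le_diam_of_mem h1' h2'
  rw [edist_dist, Subtype.dist_eq] at hedist
  rw [iter_pt f hf m _ rfl, iter_zero f hf m _ rfl] at hedist
  have : ENNReal.ofReal (1/2 : ℝ) ≤ EMetric.diam (g ⟨m, hk⟩) := by
    rw [show dist (2⁻¹:ℝ) 0 = 1/2 by rw [Real.dist_eq]; norm_num] at hedist
    exact hedist
  have := lt_of_le_of_lt this hdiam
  rw [ENNReal.ofReal_lt_ofReal_iff (by norm_num)] at this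
  norm_num at this
end

section
variable (f : Set.Icc (0:ℝ) 1 → Set.Icc (0:ℝ) 1)

lemma covSeq_isOpenCover (hf : ∀ x : Set.Icc (0:ℝ) 1, (f x : ℝ) = Real.sqrt x)
    (U : Set (Set (Set.Icc (0:ℝ) 1))) (hU : IsOpenCover U) (n : ℕ) :
    IsOpenCover (covSeq f U n) := by
  constructor
  · rintro A ⟨g, hg, rfl⟩
    exact isOpen_iInter_of_finite fun k =>
      ((hU.1 _ (hg k)).preimage ((cont_f f hf).iterate _))
  · apply Set.eq_univ_of_forall
    intro x
    have hmem : ∀ k : Fin n, ∃ A ∈ U, f^[(k:ℕ)] x ∈ A := by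
      intro k
      have : f^[(k:ℕ)] x ∈ ⋃₀ U := hU.2 ▸ Set.mem_univ _
      exact this
    choose g hg1 hg2 using hmem
    exact ⟨_, ⟨g, hg1, rfl⟩, Set.mem_iInter.2 hg2⟩

lemma lebN_pos (hf : ∀ x : Set.Icc (0:ℝ) 1, (f x : ℝ) = Real.sqrt x)
    (U : Set (Set (Set.Icc (0:ℝ) 1))) (hU : IsOpenCover U) (n : ℕ) :
    0 < lebN f U n := by
  have hC := covSeq_isOpenCover f hf U hU n
  obtain ⟨δ, δpos, hδ⟩ := lebesgue_number_lemma_of_metric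
    (s := Set.univ) (c := fun A : covSeq f U n => (A : Set (Set.Icc (0:ℝ) 1)))
    isCompact_univ (fun A => hC.1 _ A.2)
    (by intro x _
        have : x ∈ ⋃₀ covSeq f U n := hC.2 ▸ Set.mem_univ x
        obtain ⟨A, hA, hxA⟩ := this
        exact Set.mem_iUnion.2 ⟨⟨A, hA⟩, hxA⟩)
  have : ENNReal.ofReal δ ≤ lebN f U n := by
    apply le_sSup
    intro x
    obtain ⟨A, hA⟩ := hδ x (Set.mem_univ x)
    exact ⟨A, A.2, by rw [EMetric.ball, Metric.emetric_ball]; exact hA⟩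
  exact lt_of_lt_of_le (ENNReal.ofReal_pos.2 δpos) this

lemma nat_sq_le (n : ℕ) : n ^ 2 ≤ 2 ^ (n + 2) := by
  induction n with
  | zero => norm_num
  | succ n ih =>
    show (n + 1) ^ 2 ≤ 2 ^ (n + 3)
    have h := Nat.lt_two_pow_self (n := n)
    have h2 : 2 ^ (n + 3) = 2 ^ (n + 2) + 2 ^ (n + 2) := by ring
    have h3 : 2 ^ (n + 2) = 4 * 2 ^ n := by ring
    have h4 : (n + 1) ^ 2 = n ^ 2 + (2 * n + 1) := by ring
    omega

end
/-- For `f(x) = √x` on `[0,1]`: `h_L^+(f) = h_L^-(f) = ∞`, and for every finite open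
cover `U` of diameter `< 1/10`, `δ_n(f,U) ≤ 2^{-2^{n-1}}` for all `n ≥ 1`. -/
theorem hL_sqrt_eq_top (f : Set.Icc (0:ℝ) 1 → Set.Icc (0:ℝ) 1)
    (hf : ∀ x : Set.Icc (0:ℝ) 1, (f x : ℝ) = Real.sqrt x) :
    hLplusSup f = ⊤ ∧ hLminusSup f = ⊤ ∧
    ∀ U : Set (Set (Set.Icc (0:ℝ) 1)), IsOpenCover U → U.Finite →
      covDiam U < ENNReal.ofReal (1/10) →
      ∀ n : ℕ, 1 ≤ n →
        lebN f U n ≤ ENNReal.ofReal (((2:ℝ) ^ (2 ^ (n - 1) : ℕ))⁻¹) := by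
  -- a concrete finite open cover of small diameter
  obtain ⟨s, -, hsfin, hscov⟩ := finite_cover_balls_of_compact
    (isCompact_univ (X := Set.Icc (0:ℝ) 1)) (show (0:ℝ) < 1/40 by norm_num)
  set U₀ : Set (Set (Set.Icc (0:ℝ) 1)) := (fun x => Metric.ball x (1/40)) '' s with hU₀
  have hcov : IsOpenCover U₀ := by
    constructor
    · rintro A ⟨x, -, rfl⟩; exact Metric.isOpen_ball
    · apply Set.eq_univ_of_univ_subset
      intro y hy
      obtain ⟨B, hB, hyB⟩ := Set.mem_iUnion₂.1 (hscov (Set.mem_univ y))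
      exact ⟨Metric.ball B (1/40), ⟨B, hB, rfl⟩, hyB⟩
  have hfin : U₀.Finite := hsfin.image _
  have hdiam : covDiam U₀ < ENNReal.ofReal (1/10) := by
    have hle : covDiam U₀ ≤ ENNReal.ofReal (1/20) := by
      apply iSup₂_le
      rintro A ⟨x, -, rfl⟩
      calc EMetric.diam (Metric.ball x (1/40))
          = EMetric.diam (EMetric.ball x (ENNReal.ofReal (1/40))) := by
            rw [EMetric.ball, Metric.emetric_ball]
        _ ≤ 2 * ENNReal.ofReal (1/40) := EMetric.diam_ball
        _ = ENNReal.ofReal (1/20) := by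
            rw [show (2:ℝ≥0∞) = ENNReal.ofReal 2 by simp,
              ← ENNReal.ofReal_mul (by norm_num)]
            norm_num
    exact lt_of_le_of_lt hle (ENNReal.ofReal_lt_ofReal_iff (by norm_num) |>.2 (by norm_num))
  -- the key tendsto
  have hlog2 : (0:ℝ) < Real.log 2 := Real.log_pos (by norm_num)
  have hreal : Tendsto (fun n : ℕ => -Real.log ((lebN f U₀ n).toReal) / n) atTop atTop := by
    apply tendsto_atTop_mono' atTop (f₁ := fun n : ℕ => (n:ℝ) * (Real.log 2 / 8))
    · filter_upwards [eventually_ge_atTop 1] with n hn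
      have hle := lebN_bound f hf U₀ hcov hdiam n hn
      have hpos := lebN_pos f hf U₀ hcov n
      set L := (lebN f U₀ n).toReal with hL
      have hne : lebN f U₀ n ≠ ⊤ := (lt_of_le_of_lt hle ENNReal.ofReal_lt_top).ne
      have hL0 : 0 < L := ENNReal.toReal_pos hpos.ne' hne
      have hLt : L ≤ ((2:ℝ) ^ (2 ^ (n-1) : ℕ))⁻¹ :=
        ENNReal.toReal_le_of_le_ofReal (by positivity) hle
      have hlogL : Real.log L ≤ -(((2 ^ (n-1) : ℕ) : ℝ) * Real.log 2) := by
        calc Real.log L ≤ Real.log (((2:ℝ) ^ (2 ^ (n-1) : ℕ))⁻¹) :=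
              Real.log_le_log hL0 hLt
          _ = -(((2 ^ (n-1) : ℕ) : ℝ) * Real.log 2) := by
              rw [Real.log_inv, Real.log_pow]
      have hsq : ((n:ℝ))^2 ≤ 8 * (2:ℝ)^(n-1) := by
        have h1 := nat_sq_le n
        have h2 : 2^(n+2) = 8 * 2^(n-1) := by
          rw [show n + 2 = (n-1) + 3 by omega, pow_add]; ring
        have h3 : n^2 ≤ 8 * 2^(n-1) := by omega
        exact_mod_cast h3
      rw [le_div_iff₀ (by positivity : (0:ℝ) < (n:ℝ))]
      have hcast : (((2 ^ (n-1) : ℕ)) : ℝ) = (2:ℝ)^(n-1) := by push_cast; ring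
      calc (n:ℝ) * (Real.log 2 / 8) * n = (n:ℝ)^2 * Real.log 2 / 8 := by ring
        _ ≤ (2:ℝ)^(n-1) * Real.log 2 := by nlinarith
        _ ≤ -Real.log L := by rw [← hcast]; linarith
    · exact Tendsto.atTop_mul_const (by positivity) tendsto_natCast_atTop_atTop
  have key : Tendsto
      (fun n : ℕ => ((-Real.log ((lebN f U₀ n).toReal) / n : ℝ) : EReal)) atTop (𝓝 ⊤) := by
    rw [EReal.tendsto_nhds_top_iff_real]
    intro C
    filter_upwards [hreal.eventually_gt_atTop C] with n hn
    exact_mod_cast hn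
  refine ⟨?_, ?_, fun U hU _ hUd n hn => lebN_bound f hf U hU hUd n hn⟩
  · have h1 : hLplus f U₀ = ⊤ := key.limsup_eq
    have h2 : hLplus f U₀ ≤ hLplusSup f :=
      le_iSup₂ (f := fun U (_ : IsOpenCover U ∧ U.Finite) => hLplus f U) U₀ ⟨hcov, hfin⟩
    exact top_le_iff.1 (h1 ▸ h2)
  · have h1 : hLminus f U₀ = ⊤ := key.liminf_eq
    have h2 : hLminus f U₀ ≤ hLminusSup f :=
      le_iSup₂ (f := fun U (_ : IsOpenCover U ∧ U.Finite) => hLminus f U) U₀ ⟨hcov, hfin⟩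
    exact top_le_iff.1 (h1 ▸ h2)
end
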